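/- For the sequence t_n = 1 − e^{−n}, the vertical position of the particle in the construction satisfies s_y(t_n) = (5³(e−1)³)/(6³·8π) · Σ_{i=1}^{n} e^{−3i} for all n ∈ ℕ, and consequently s_y(t_n) → 5³(e−1)³/(6³·8π(e³−1)) as n → ∞. -/

import Mathlib

open Real Filter

/-- The acceleration bump `φ_{a,b}`. -/
noncomputable def phi (a b t : ℝ) : ℝ :=
  ((b - a) / 4) * Real.sin (2 * π * (t - a) / (b - a))

/-- The round-trip acceleration `ξ_{a,b}`. -/
noncomputable def xi (a b t : ℝ) : ℝ :=
  if t ≤ (a + b) / 2 then -phi a ((a + b) / 2) t else phi ((a + b) / 2) b t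

/-- The division points `d_i` used in the definition of `ψ_{a,b,n}`. -/
noncomputable def dPt (a b : ℝ) (n i : ℕ) : ℝ :=
  (a + 5 * b) / 6 + (i : ℝ) * (b - a) / (6 * (n : ℝ))

/-- The acceleration `ψ_{a,b,n}` : one forward bump followed by `n` round trips. -/
noncomputable def psi (a b : ℝ) (n : ℕ) (t : ℝ) : ℝ :=
  if t ≤ dPt a b n 0 then phi a (dPt a b n 0) t
  else
    xi (dPt a b n (⌈(t - dPt a b n 0) / ((b - a) / (6 * (n : ℝ)))⌉₊ - 1))
       (dPt a b n ⌈(t - dPt a b n 0) / ((b - a) / (6 * (n : ℝ)))⌉₊) t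

/-- The stopping times `t_n = 1 - e^{-n}`. -/
noncomputable def tSeq (n : ℕ) : ℝ := 1 - Real.exp (-(n : ℝ))

/-- The vertical acceleration `a_y` of the construction. -/
noncomputable def aY (t : ℝ) : ℝ :=
  if t < 1 then
    psi (tSeq ⌊-Real.log (1 - t)⌋₊) (tSeq (⌊-Real.log (1 - t)⌋₊ + 1))
      (⌊-Real.log (1 - t)⌋₊ + 1) t
  else 0

/-- The vertical velocity `v_y`. -/
noncomputable def vY (t : ℝ) : ℝ := ∫ θ in (0 : ℝ)..t, aY θ

/-- The vertical position `s_y`. -/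
noncomputable def sY (t : ℝ) : ℝ := ∫ θ in (0 : ℝ)..t, vY θ


open MeasureTheory Set intervalIntegral

noncomputable def Phi (a b t : ℝ) : ℝ :=
  (b-a)^2/(8*π) * (1 - Real.cos (2*π*(t-a)/(b-a)))

noncomputable def Phi2 (a b t : ℝ) : ℝ :=
  (b-a)^2/(8*π) * ((t-a) - (b-a)/(2*π) * Real.sin (2*π*(t-a)/(b-a)))

lemma hasDerivAt_lin (a b t : ℝ) :
    HasDerivAt (fun t : ℝ => 2*π*(t-a)/(b-a)) (2*π/(b-a)) t := by
  have h : (fun t : ℝ => 2*π*(t-a)/(b-a)) = fun t : ℝ => (2*π/(b-a))*t - (2*π/(b-a))*a := by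
    funext s; ring
  rw [h]
  simpa using ((hasDerivAt_id t).const_mul (2*π/(b-a))).sub_const ((2*π/(b-a))*a)

lemma hasDerivAt_Phi {a b : ℝ} (hab : a ≠ b) (t : ℝ) :
    HasDerivAt (Phi a b) (phi a b t) t := by
  have hba : b - a ≠ 0 := sub_ne_zero.2 (Ne.symm hab)
  have h2 : HasDerivAt (fun t : ℝ => Real.cos (2*π*(t-a)/(b-a)))
      (-Real.sin (2*π*(t-a)/(b-a)) * (2*π/(b-a))) t :=
    (Real.hasDerivAt_cos _).comp t (hasDerivAt_lin a b t)
  have h3 : HasDerivAt (fun y : ℝ => (b-a)^2/(8*π) * (1 - Real.cos (2*π*(y-a)/(b-a)))) _ t :=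
    (h2.const_sub 1).const_mul ((b-a)^2/(8*π))
  convert h3 using 1
  · rfl
  unfold phi
  have hπ : π ≠ 0 := Real.pi_ne_zero
  field_simp
  ring

lemma hasDerivAt_Phi2 {a b : ℝ} (hab : a ≠ b) (t : ℝ) :
    HasDerivAt (Phi2 a b) (Phi a b t) t := by
  have hba : b - a ≠ 0 := sub_ne_zero.2 (Ne.symm hab)
  have h2 : HasDerivAt (fun t : ℝ => Real.sin (2*π*(t-a)/(b-a)))
      (Real.cos (2*π*(t-a)/(b-a)) * (2*π/(b-a))) t :=
    (Real.hasDerivAt_sin _).comp t (hasDerivAt_lin a b t)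
  have h1 : HasDerivAt (fun t : ℝ => t - a) 1 t := (hasDerivAt_id t).sub_const a
  have h3 : HasDerivAt (fun y : ℝ => (b-a)^2/(8*π) * ((y-a) - (b-a)/(2*π) * Real.sin (2*π*(y-a)/(b-a)))) _ t :=
    ((h1.sub (h2.const_mul ((b-a)/(2*π)))).const_mul ((b-a)^2/(8*π)))
  convert h3 using 1
  · rfl
  unfold Phi
  have hπ : π ≠ 0 := Real.pi_ne_zero
  field_simp

lemma continuous_phi (a b : ℝ) : Continuous (phi a b) := by
  unfold phi; fun_prop

lemma continuous_Phi (a b : ℝ) : Continuous (Phi a b) := by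
  unfold Phi; fun_prop

lemma integral_phi {a b : ℝ} (hab : a ≠ b) (s u : ℝ) :
    ∫ t in s..u, phi a b t = Phi a b u - Phi a b s :=
  intervalIntegral.integral_eq_sub_of_hasDerivAt (fun t _ => hasDerivAt_Phi hab t)
    ((continuous_phi a b).intervalIntegrable s u)

lemma Phi_left (a b : ℝ) : Phi a b a = 0 := by simp [Phi]

lemma Phi_right {a b : ℝ} (hab : a ≠ b) : Phi a b b = 0 := by
  have hba : b - a ≠ 0 := sub_ne_zero.2 (Ne.symm hab)
  unfold Phi
  rw [show 2*π*(b-a)/(b-a) = 2*π by field_simp]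
  simp [Real.cos_two_pi]

lemma integral_Phi {a b : ℝ} (hab : a ≠ b) :
    ∫ t in a..b, Phi a b t = (b-a)^3/(8*π) := by
  rw [intervalIntegral.integral_eq_sub_of_hasDerivAt (fun t _ => hasDerivAt_Phi2 hab t)
    ((continuous_Phi a b).intervalIntegrable a b)]
  have hba : b - a ≠ 0 := sub_ne_zero.2 (Ne.symm hab)
  unfold Phi2
  rw [show 2*π*(b-a)/(b-a) = 2*π by field_simp, show 2*π*(a-a)/(b-a) = 0 by simp]
  simp [Real.sin_two_pi]
  field_simp

lemma ae_imp_of_eqOn_Ioo {f g : ℝ → ℝ} {a b : ℝ} (hab : a ≤ b)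
    (h : Set.EqOn f g (Set.Ioo a b)) :
    ∀ᵐ x, x ∈ Set.uIoc a b → f x = g x := by
  rw [MeasureTheory.ae_iff]
  refine MeasureTheory.measure_mono_null ?_ (MeasureTheory.measure_singleton b)
  intro x hx
  simp only [Set.mem_setOf_eq, _root_.not_imp] at hx
  obtain ⟨hx1, hx2⟩ := hx
  rw [Set.uIoc_of_le hab] at hx1
  by_contra hb
  simp only [Set.mem_singleton_iff] at hb
  exact hx2 (h ⟨hx1.1, lt_of_le_of_ne hx1.2 hb⟩)

lemma integral_congr_Ioo {f g : ℝ → ℝ} {a b : ℝ} (hab : a ≤ b)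
    (h : Set.EqOn f g (Set.Ioo a b)) :
    ∫ t in a..b, f t = ∫ t in a..b, g t :=
  intervalIntegral.integral_congr_ae (ae_imp_of_eqOn_Ioo hab h)

lemma II_congr_Ioo {f g : ℝ → ℝ} {a b : ℝ} (hab : a ≤ b)
    (h : Set.EqOn g f (Set.Ioo a b)) (hg : IntervalIntegrable g volume a b) :
    IntervalIntegrable f volume a b :=
  hg.congr_ae ((MeasureTheory.ae_restrict_iff' measurableSet_uIoc).mpr (ae_imp_of_eqOn_Ioo hab h))

section xiLemmas
variable {p q : ℝ}

lemma xi_eq_left {t : ℝ} (ht : t ≤ (p+q)/2) : xi p q t = -phi p ((p+q)/2) t := if_pos ht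
lemma xi_eq_right {t : ℝ} (ht : (p+q)/2 < t) : xi p q t = phi ((p+q)/2) q t := if_neg (not_le.2 ht)

lemma II_xi_left (hpq : p < q) :
    IntervalIntegrable (xi p q) volume p ((p+q)/2) := by
  have hm : p ≤ (p+q)/2 := by linarith
  exact II_congr_Ioo hm (fun t ht => (xi_eq_left ht.2.le).symm)
    (((continuous_phi p ((p+q)/2)).neg).intervalIntegrable _ _)

lemma II_xi_right (hpq : p < q) :
    IntervalIntegrable (xi p q) volume ((p+q)/2) q := by
  have hm : (p+q)/2 ≤ q := by linarith
  exact II_congr_Ioo hm (fun t ht => (xi_eq_right ht.1).symm)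
    ((continuous_phi ((p+q)/2) q).intervalIntegrable _ _)

lemma II_xi (hpq : p < q) : IntervalIntegrable (xi p q) volume p q :=
  (II_xi_left hpq).trans (II_xi_right hpq)

lemma integral_xi_left (hpq : p < q) : ∫ t in p..((p+q)/2), xi p q t = 0 := by
  have hm : p < (p+q)/2 := by linarith
  rw [integral_congr_Ioo hm.le (fun t ht => xi_eq_left ht.2.le)]
  rw [intervalIntegral.integral_neg, integral_phi hm.ne, Phi_left, Phi_right hm.ne]
  ring

lemma integral_xi_right (hpq : p < q) : ∫ t in ((p+q)/2)..q, xi p q t = 0 := by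
  have hm : (p+q)/2 < q := by linarith
  rw [integral_congr_Ioo hm.le (fun t ht => xi_eq_right ht.1)]
  rw [integral_phi hm.ne, Phi_left, Phi_right hm.ne]
  ring

lemma integral_xi (hpq : p < q) : ∫ t in p..q, xi p q t = 0 := by
  rw [← intervalIntegral.integral_add_adjacent_intervals (II_xi_left hpq) (II_xi_right hpq),
    integral_xi_left hpq, integral_xi_right hpq]
  ring

/-- running integral of xi on the left half -/
lemma vxi_left (hpq : p < q) {t : ℝ} (ht : t ∈ Set.Icc p ((p+q)/2)) :
    ∫ s in p..t, xi p q s = -Phi p ((p+q)/2) t := by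
  have hm : p < (p+q)/2 := by linarith
  rw [integral_congr_Ioo ht.1 (fun s hs => xi_eq_left (hs.2.le.trans ht.2))]
  rw [intervalIntegral.integral_neg, integral_phi hm.ne, Phi_left]
  ring

lemma vxi_right (hpq : p < q) {t : ℝ} (ht : t ∈ Set.Icc ((p+q)/2) q) :
    ∫ s in p..t, xi p q s = Phi ((p+q)/2) q t := by
  have hm : (p+q)/2 < q := by linarith
  rw [← intervalIntegral.integral_add_adjacent_intervals (II_xi_left hpq)
    ((II_xi_right hpq).mono_set (by rw [Set.uIcc_of_le ht.1, Set.uIcc_of_le (by linarith : (p+q)/2 ≤ q)]; exact Set.Icc_subset_Icc le_rfl ht.2)),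
    integral_xi_left hpq]
  rw [integral_congr_Ioo ht.1 (fun s hs => xi_eq_right hs.1)]
  rw [integral_phi hm.ne, Phi_left]
  ring

lemma II_vxi (hpq : p < q) :
    IntervalIntegrable (fun t => ∫ s in p..t, xi p q s) volume p q := by
  have hm1 : p < (p+q)/2 := by linarith
  have hm2 : (p+q)/2 < q := by linarith
  refine IntervalIntegrable.trans (b := (p+q)/2) ?_ ?_
  · exact II_congr_Ioo hm1.le (fun t ht => (vxi_left hpq ⟨ht.1.le, ht.2.le⟩).symm)
      (((continuous_Phi _ _).neg).intervalIntegrable _ _)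
  · exact II_congr_Ioo hm2.le (fun t ht => (vxi_right hpq ⟨ht.1.le, ht.2.le⟩).symm)
      ((continuous_Phi _ _).intervalIntegrable _ _)

lemma integral_vxi (hpq : p < q) :
    ∫ t in p..q, (∫ s in p..t, xi p q s) = 0 := by
  have hm1 : p < (p+q)/2 := by linarith
  have hm2 : (p+q)/2 < q := by linarith
  rw [← intervalIntegral.integral_add_adjacent_intervals (c := q)
    (((II_vxi hpq).mono_set (by rw [Set.uIcc_of_le hm1.le, Set.uIcc_of_le hpq.le]; exact Set.Icc_subset_Icc le_rfl hm2.le)))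
    (((II_vxi hpq).mono_set (by rw [Set.uIcc_of_le hm2.le, Set.uIcc_of_le hpq.le]; exact Set.Icc_subset_Icc hm1.le le_rfl)))]
  rw [integral_congr_Ioo hm1.le (fun t ht => vxi_left hpq ⟨ht.1.le, ht.2.le⟩),
      integral_congr_Ioo hm2.le (fun t ht => vxi_right hpq ⟨ht.1.le, ht.2.le⟩),
      intervalIntegral.integral_neg, integral_Phi hm1.ne, integral_Phi hm2.ne]
  ring

section psiLemmas
variable {a b : ℝ} {n : ℕ}

lemma dPt_succ (i : ℕ) : dPt a b n (i+1) = dPt a b n i + (b-a)/(6*(n:ℝ)) := by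
  unfold dPt; push_cast
  by_cases h : (n:ℝ) = 0
  · simp [h]
  · field_simp; ring

lemma dPt_eq (i : ℕ) : dPt a b n i = dPt a b n 0 + (i:ℝ) * ((b-a)/(6*(n:ℝ))) := by
  unfold dPt; push_cast; ring

lemma a_lt_d0 (hab : a < b) : a < dPt a b n 0 := by
  unfold dPt; push_cast; simp; linarith

lemma d0_sub (hab : a < b) : dPt a b n 0 - a = 5*(b-a)/6 := by
  unfold dPt; push_cast; ring

lemma hstep_pos (hab : a < b) (hn : n ≠ 0) : 0 < (b-a)/(6*(n:ℝ)) := by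
  apply div_pos (by linarith)
  have : (0:ℝ) < (n:ℝ) := by exact_mod_cast Nat.pos_of_ne_zero hn
  linarith

lemma dPt_lt_succ (hab : a < b) (hn : n ≠ 0) (i : ℕ) : dPt a b n i < dPt a b n (i+1) := by
  rw [dPt_succ]
  have := hstep_pos (a := a) (b := b) hab hn
  linarith

lemma dPt_mono (hab : a < b) (hn : n ≠ 0) : StrictMono (dPt a b n) :=
  strictMono_nat_of_lt_succ (dPt_lt_succ hab hn)

lemma dPt_last (hn : n ≠ 0) : dPt a b n n = b := by
  unfold dPt
  have h : (n:ℝ) ≠ 0 := Nat.cast_ne_zero.2 hn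
  field_simp
  ring

lemma ceil_eq {i : ℕ} (hab : a < b) (hn : n ≠ 0) {t : ℝ}
    (ht : t ∈ Set.Ioc (dPt a b n i) (dPt a b n (i+1))) :
    ⌈(t - dPt a b n 0) / ((b - a) / (6 * (n : ℝ)))⌉₊ = i + 1 := by
  have hstep := hstep_pos (a := a) (b := b) hab hn
  rw [Nat.ceil_eq_iff (Nat.succ_ne_zero i)]
  have h1 := ht.1
  have h2 := ht.2
  rw [dPt_eq i] at h1
  rw [dPt_eq (i+1)] at h2
  constructor
  · push_cast
    rw [lt_div_iff₀ hstep]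
    linarith
  · push_cast
    rw [div_le_iff₀ hstep]
    push_cast at h2
    linarith

lemma psi_eq_bump {t : ℝ} (ht : t ≤ dPt a b n 0) : psi a b n t = phi a (dPt a b n 0) t :=
  if_pos ht

lemma psi_eq_osc {i : ℕ} (hab : a < b) (hn : n ≠ 0) {t : ℝ}
    (ht : t ∈ Set.Ioc (dPt a b n i) (dPt a b n (i+1))) :
    psi a b n t = xi (dPt a b n i) (dPt a b n (i+1)) t := by
  have hd0 : dPt a b n 0 ≤ dPt a b n i := (dPt_mono hab hn).monotone (Nat.zero_le i)
  unfold psi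
  rw [if_neg (by push_neg; exact lt_of_le_of_lt hd0 ht.1), ceil_eq hab hn ht]
  simp

lemma psi_key (hab : a < b) (hn : n ≠ 0) :
    ∀ i, i ≤ n →
    IntervalIntegrable (psi a b n) volume a (dPt a b n i) ∧
    (∫ t in a..(dPt a b n i), psi a b n t) = 0 ∧
    (∫ t in a..(dPt a b n i), (∫ s in a..t, psi a b n s)) = (5*(b-a)/6)^3/(8*π) := by
  intro i
  induction i with
  | zero =>
    intro _
    have had : a < dPt a b n 0 := a_lt_d0 hab
    refine ⟨?_, ?_, ?_⟩
    · exact II_congr_Ioo had.le (fun t ht => (psi_eq_bump ht.2.le).symm)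
        ((continuous_phi _ _).intervalIntegrable _ _)
    · rw [integral_congr_Ioo had.le (fun t ht => psi_eq_bump ht.2.le),
        integral_phi had.ne, Phi_left, Phi_right had.ne]
      ring
    · have hV : Set.EqOn (fun t => ∫ s in a..t, psi a b n s) (Phi a (dPt a b n 0))
          (Set.Icc a (dPt a b n 0)) := by
        intro t ht
        simp only
        rw [integral_congr_Ioo ht.1 (fun s hs => psi_eq_bump (hs.2.le.trans ht.2)),
          integral_phi had.ne, Phi_left]
        ring
      rw [intervalIntegral.integral_congr (by rw [Set.uIcc_of_le had.le]; exact hV),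
        integral_Phi had.ne, d0_sub hab]
  | succ i IH =>
    intro hi
    have hii : i ≤ n := Nat.le_of_succ_le hi
    obtain ⟨ih1, ih2, ih3⟩ := IH hii
    have hdd : dPt a b n i < dPt a b n (i+1) := dPt_lt_succ hab hn i
    have hai : a < dPt a b n i := lt_of_lt_of_le (a_lt_d0 hab) ((dPt_mono hab hn).monotone (Nat.zero_le i))
    have hEqOsc : Set.EqOn (psi a b n) (xi (dPt a b n i) (dPt a b n (i+1)))
        (Set.Ioc (dPt a b n i) (dPt a b n (i+1))) := fun t ht => psi_eq_osc hab hn ht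
    have hIIpiece : IntervalIntegrable (psi a b n) volume (dPt a b n i) (dPt a b n (i+1)) :=
      II_congr_Ioo hdd.le (fun t ht => (hEqOsc (Set.Ioo_subset_Ioc_self ht)).symm) (II_xi hdd)
    have hII : IntervalIntegrable (psi a b n) volume a (dPt a b n (i+1)) := ih1.trans hIIpiece
    have hintpiece : (∫ t in (dPt a b n i)..(dPt a b n (i+1)), psi a b n t) = 0 := by
      rw [integral_congr_Ioo hdd.le (fun t ht => hEqOsc (Set.Ioo_subset_Ioc_self ht))]
      exact integral_xi hdd
    have hint : (∫ t in a..(dPt a b n (i+1)), psi a b n t) = 0 := by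
      rw [← intervalIntegral.integral_add_adjacent_intervals ih1 hIIpiece, ih2, hintpiece]; ring
    have hVpiece : Set.EqOn (fun t => ∫ s in a..t, psi a b n s)
        (fun t => ∫ s in (dPt a b n i)..t, xi (dPt a b n i) (dPt a b n (i+1)) s)
        (Set.Icc (dPt a b n i) (dPt a b n (i+1))) := by
      intro t ht
      simp only
      have hsub : IntervalIntegrable (psi a b n) volume (dPt a b n i) t := hIIpiece.mono_set (by rw [Set.uIcc_of_le ht.1, Set.uIcc_of_le hdd.le]; exact Set.Icc_subset_Icc le_rfl ht.2)
      rw [← intervalIntegral.integral_add_adjacent_intervals ih1 hsub, ih2, zero_add]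
      exact integral_congr_Ioo ht.1 (fun s hs => hEqOsc ⟨hs.1, hs.2.le.trans ht.2⟩)
    have hIIV1 : IntervalIntegrable (fun t => ∫ s in a..t, psi a b n s) volume a (dPt a b n i) := by
      apply ContinuousOn.intervalIntegrable
      apply continuousOn_primitive_interval
      rw [Set.uIcc_of_le hai.le]
      exact (intervalIntegrable_iff_integrableOn_Icc_of_le hai.le).1 ih1
    have hIIV2 : IntervalIntegrable (fun t => ∫ s in a..t, psi a b n s) volume
        (dPt a b n i) (dPt a b n (i+1)) :=
      II_congr_Ioo hdd.le (fun t ht => (hVpiece (Set.Ioo_subset_Icc_self ht)).symm) (II_vxi hdd)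
    refine ⟨hII, hint, ?_⟩
    rw [← intervalIntegral.integral_add_adjacent_intervals hIIV1 hIIV2, ih3,
      intervalIntegral.integral_congr (by rw [Set.uIcc_of_le hdd.le]; exact hVpiece),
      integral_vxi hdd, add_zero]

lemma psi_main (hab : a < b) (hn : n ≠ 0) :
    IntervalIntegrable (psi a b n) volume a b ∧
    (∫ t in a..b, psi a b n t) = 0 ∧
    (∫ t in a..b, (∫ s in a..t, psi a b n s)) = (5*(b-a)/6)^3/(8*π) := by
  have := psi_key hab hn n le_rfl
  rwa [dPt_last hn] at this

end psiLemmas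

lemma tSeq_zero : tSeq 0 = 0 := by simp [tSeq]

lemma tSeq_lt_one (n : ℕ) : tSeq n < 1 := by
  unfold tSeq; have := Real.exp_pos (-(n:ℝ)); linarith

lemma tSeq_lt_succ (m : ℕ) : tSeq m < tSeq (m+1) := by
  unfold tSeq
  have : Real.exp (-((m:ℝ)+1)) < Real.exp (-(m:ℝ)) := Real.exp_lt_exp.2 (by linarith)
  push_cast
  linarith

lemma tSeq_diff (m : ℕ) : tSeq (m+1) - tSeq m = Real.exp (-((m:ℝ)+1)) * (Real.exp 1 - 1) := by
  unfold tSeq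
  push_cast
  rw [show -(m:ℝ) = -((m:ℝ)+1) + 1 by ring, Real.exp_add]
  ring

lemma floor_log (m : ℕ) {t : ℝ} (ht : t ∈ Set.Ico (tSeq m) (tSeq (m+1))) :
    ⌊-Real.log (1 - t)⌋₊ = m := by
  have h1 : 1 - t ≤ Real.exp (-(m:ℝ)) := by
    have := ht.1; unfold tSeq at this; linarith
  have h2 : Real.exp (-((m:ℝ)+1)) < 1 - t := by
    have := ht.2; unfold tSeq at this; push_cast at this; linarith
  have hpos : 0 < 1 - t := lt_trans (Real.exp_pos _) h2
  have hle := (Real.log_le_iff_le_exp hpos).2 h1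
  have hlt := (Real.lt_log_iff_exp_lt hpos).2 h2
  have hm : (0:ℝ) ≤ (m:ℝ) := Nat.cast_nonneg m
  rw [Nat.floor_eq_iff (by linarith)]
  constructor
  · linarith
  · linarith

lemma aY_eq (m : ℕ) {t : ℝ} (ht : t ∈ Set.Ico (tSeq m) (tSeq (m+1))) :
    aY t = psi (tSeq m) (tSeq (m+1)) (m+1) t := by
  unfold aY
  rw [if_pos (lt_trans ht.2 (tSeq_lt_one (m+1))), floor_log m ht]

lemma II_aY_seg (m : ℕ) : IntervalIntegrable aY volume (tSeq m) (tSeq (m+1)) :=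
  II_congr_Ioo (tSeq_lt_succ m).le
    (fun t ht => (aY_eq m ⟨ht.1.le, ht.2⟩).symm)
    (psi_main (tSeq_lt_succ m) (Nat.succ_ne_zero m)).1

lemma integral_aY_seg (m : ℕ) : ∫ t in (tSeq m)..(tSeq (m+1)), aY t = 0 := by
  rw [integral_congr_Ioo (tSeq_lt_succ m).le (fun t ht => aY_eq m ⟨ht.1.le, ht.2⟩)]
  exact (psi_main (tSeq_lt_succ m) (Nat.succ_ne_zero m)).2.1

lemma II_aY_to (m : ℕ) : IntervalIntegrable aY volume (tSeq 0) (tSeq m) :=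
  IntervalIntegrable.trans_iterate (fun k _ => II_aY_seg k)

lemma vY_tSeq (m : ℕ) : vY (tSeq m) = 0 := by
  induction m with
  | zero => rw [tSeq_zero]; simp [vY]
  | succ m ih =>
    have h1 := II_aY_to m
    rw [tSeq_zero] at h1
    unfold vY
    rw [← intervalIntegral.integral_add_adjacent_intervals h1 (II_aY_seg m),
      integral_aY_seg m]
    unfold vY at ih
    rw [ih, add_zero]

lemma vY_eq (m : ℕ) {t : ℝ} (ht : t ∈ Set.Icc (tSeq m) (tSeq (m+1))) :
    vY t = ∫ s in (tSeq m)..t, psi (tSeq m) (tSeq (m+1)) (m+1) s := by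
  have h1 := II_aY_to m
  rw [tSeq_zero] at h1
  have h2 : IntervalIntegrable aY volume (tSeq m) t := (II_aY_seg m).mono_set (by rw [Set.uIcc_of_le ht.1, Set.uIcc_of_le (tSeq_lt_succ m).le]; exact Set.Icc_subset_Icc le_rfl ht.2)
  unfold vY
  rw [← intervalIntegral.integral_add_adjacent_intervals h1 h2]
  have h0 : (∫ s in (0:ℝ)..(tSeq m), aY s) = 0 := by
    have := vY_tSeq m; unfold vY at this; exact this
  rw [h0, zero_add]
  exact integral_congr_Ioo ht.1 (fun s hs => aY_eq m ⟨hs.1.le, lt_of_lt_of_le hs.2 ht.2⟩)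

lemma II_vY_seg (m : ℕ) : IntervalIntegrable vY volume (tSeq m) (tSeq (m+1)) := by
  have hab := tSeq_lt_succ m
  have hG : IntervalIntegrable (fun t => ∫ s in (tSeq m)..t, psi (tSeq m) (tSeq (m+1)) (m+1) s) volume (tSeq m) (tSeq (m+1)) := by
    apply ContinuousOn.intervalIntegrable
    apply continuousOn_primitive_interval
    rw [Set.uIcc_of_le hab.le]
    exact (intervalIntegrable_iff_integrableOn_Icc_of_le hab.le).1 (psi_main hab (Nat.succ_ne_zero m)).1
  exact II_congr_Ioo hab.le (fun t ht => (vY_eq m (Set.Ioo_subset_Icc_self ht)).symm) hG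

lemma integral_vY_seg (m : ℕ) :
    ∫ t in (tSeq m)..(tSeq (m+1)), vY t
      = (5 ^ 3 * (Real.exp 1 - 1) ^ 3 / (6 ^ 3 * 8 * π)) * Real.exp (-(3:ℝ) * ((m:ℝ)+1)) := by
  have hab := tSeq_lt_succ m
  rw [intervalIntegral.integral_congr
    (g := fun t => ∫ s in (tSeq m)..t, psi (tSeq m) (tSeq (m+1)) (m+1) s)
    (by rw [Set.uIcc_of_le hab.le]; exact fun t ht => vY_eq m ht)]
  rw [(psi_main hab (Nat.succ_ne_zero m)).2.2, tSeq_diff m]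
  rw [show (-(3:ℝ) * ((m:ℝ)+1)) = ((3:ℕ):ℝ) * (-((m:ℝ)+1)) by push_cast; ring,
    Real.exp_nat_mul]
  have hπ := Real.pi_ne_zero
  field_simp


theorem sY_at_tn :
    (∀ N : ℕ, sY (tSeq N) =
      (5 ^ 3 * (Real.exp 1 - 1) ^ 3 / (6 ^ 3 * 8 * π)) *
        ∑ i ∈ Finset.Icc 1 N, Real.exp (-(3 : ℝ) * (i : ℝ))) ∧
    Tendsto (fun N => sY (tSeq N)) atTop
      (nhds (5 ^ 3 * (Real.exp 1 - 1) ^ 3 / (6 ^ 3 * 8 * π * (Real.exp 3 - 1)))) := by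
  set C := 5 ^ 3 * (Real.exp 1 - 1) ^ 3 / (6 ^ 3 * 8 * π) with hC
  have hsum : ∀ N : ℕ, sY (tSeq N) =
      C * ∑ i ∈ Finset.Icc 1 N, Real.exp (-(3 : ℝ) * (i : ℝ)) := by
    intro N
    unfold sY
    rw [show (0:ℝ) = tSeq 0 from tSeq_zero.symm,
      ← intervalIntegral.sum_integral_adjacent_intervals (fun k _ => II_vY_seg k)]
    calc ∑ k ∈ Finset.range N, ∫ t in (tSeq k)..(tSeq (k+1)), vY t
        = ∑ k ∈ Finset.range N, C * Real.exp (-(3:ℝ) * ((k:ℝ)+1)) :=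
          Finset.sum_congr rfl (fun k _ => integral_vY_seg k)
      _ = C * ∑ i ∈ Finset.Icc 1 N, Real.exp (-(3 : ℝ) * (i : ℝ)) := by
          rw [Finset.mul_sum,
            show Finset.Icc 1 N = Finset.Ico 1 (N+1) from (Finset.Ico_add_one_right_eq_Icc 1 N).symm,
            Finset.sum_Ico_eq_sum_range]
          simp only [Nat.add_sub_cancel]
          apply Finset.sum_congr rfl
          intro k _
          push_cast
          ring_nf
  refine ⟨hsum, ?_⟩
  have hr0 : (0:ℝ) ≤ Real.exp (-3) := (Real.exp_pos _).le
  have hr1 : Real.exp (-3:ℝ) < 1 := Real.exp_lt_one_iff.2 (by norm_num)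
  have hexp : ∀ i : ℕ, Real.exp (-(3:ℝ) * (i:ℝ)) = Real.exp (-3:ℝ) ^ i := by
    intro i
    rw [← Real.exp_nat_mul]
    ring_nf
  have hkey : ∀ N : ℕ, sY (tSeq N)
      = C * ((∑ i ∈ Finset.range (N+1), Real.exp (-3:ℝ) ^ i) - 1) := by
    intro N
    rw [hsum N]
    congr 1
    rw [show Finset.Icc 1 N = Finset.Ico 1 (N+1) from (Finset.Ico_add_one_right_eq_Icc 1 N).symm,
      Finset.sum_Ico_eq_sub _ (Nat.succ_le_succ (Nat.zero_le N)),
      Finset.sum_range_one]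
    rw [Finset.sum_congr rfl (fun i _ => hexp i)]
    norm_num
  have hgeo := (hasSum_geometric_of_lt_one hr0 hr1).tendsto_sum_nat
  have hT : Tendsto (fun N : ℕ => ∑ i ∈ Finset.range (N+1), Real.exp (-3:ℝ) ^ i) atTop
      (nhds ((1 - Real.exp (-3:ℝ))⁻¹)) := hgeo.comp (tendsto_add_atTop_nat 1)
  have hfin := (hT.sub (tendsto_const_nhds (x := (1:ℝ)))).const_mul C
  have hval : C * ((1 - Real.exp (-3:ℝ))⁻¹ - 1)
      = 5 ^ 3 * (Real.exp 1 - 1) ^ 3 / (6 ^ 3 * 8 * π * (Real.exp 3 - 1)) := by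
    have he3 : Real.exp (-3:ℝ) = (Real.exp 3)⁻¹ := Real.exp_neg 3
    have hpos : (0:ℝ) < Real.exp 3 := Real.exp_pos 3
    have hne : Real.exp 3 - 1 ≠ 0 := by
      have : (1:ℝ) < Real.exp 3 := by
        rw [← Real.exp_zero]; exact Real.exp_lt_exp.2 (by norm_num)
      linarith
    have h1r : 1 - Real.exp (-3:ℝ) ≠ 0 := by linarith
    rw [hC, he3]
    have hπ := Real.pi_ne_zero
    field_simp
    ring
  rw [← hval]
  exact Tendsto.congr (fun N => (hkey N).symm) hfin
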